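/- Let M_RE be a k×k positive definite real matrix, ρ ∈ (0,1], and M a (k+l)×(k+l) positive definite real symmetric matrix with M ⪰ ρ·pad(M_RE). Then for every index j < k (identified with the corresponding index of the larger matrix), (M⁻¹)_{jj} ≤ ρ⁻¹·(M_RE⁻¹)_{jj}. This is the inequality underlying Theorem 4(3): the combined-data asymptotic variance of each working-model coefficient is at most the RE-only asymptotic variance. -/

import Mathlib

open Matrix

/-- Key variational lemma: for a positive definite real matrix `A`,
`2 u j - uᵀ A u ≤ (A⁻¹) j j` for all vectors `u`. -/
lemma key_var {n : Type*} [Fintype n] [DecidableEq n]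
    (A : Matrix n n ℝ) (hA : A.PosDef) (j : n) (u : n → ℝ) :
    2 * u j - u ⬝ᵥ (A *ᵥ u) ≤ A⁻¹ j j := by
  have hdet : IsUnit A.det := isUnit_iff_ne_zero.mpr (ne_of_gt hA.det_pos)
  set v : n → ℝ := A⁻¹ *ᵥ Pi.single j 1 with hv
  have hAv : A *ᵥ v = Pi.single j 1 := by
    rw [hv, mulVec_mulVec, mul_nonsing_inv _ hdet, one_mulVec]
  have h0 : 0 ≤ (u - v) ⬝ᵥ (A *ᵥ (u - v)) := by
    have := hA.posSemidef.dotProduct_mulVec_nonneg (u - v)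
    simpa using this
  have huv : u ⬝ᵥ (A *ᵥ v) = u j := by
    rw [hAv, dotProduct_single, mul_one]
  have hsym : Aᵀ = A := by
    ext i j'
    simpa using congrFun (congrFun hA.isHermitian.eq i) j'
  have hvu : v ⬝ᵥ (A *ᵥ u) = u j := by
    rw [dotProduct_mulVec, ← mulVec_transpose, hsym, hAv, single_dotProduct, one_mul]
  have hvv : v ⬝ᵥ (A *ᵥ v) = A⁻¹ j j := by
    rw [hAv, dotProduct_single, mul_one, hv]
    simp [mulVec_single]
  have hexp : (u - v) ⬝ᵥ (A *ᵥ (u - v))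
      = u ⬝ᵥ (A *ᵥ u) - u ⬝ᵥ (A *ᵥ v) - v ⬝ᵥ (A *ᵥ u) + v ⬝ᵥ (A *ᵥ v) := by
    rw [mulVec_sub, sub_dotProduct, dotProduct_sub, dotProduct_sub]
    ring
  rw [hexp, huv, hvu, hvv] at h0
  linarith

/-- if `M_RE` is `k×k` positive definite, `ρ ∈ (0,1]`, and `M` is a
`(k+l)×(k+l)` positive definite symmetric matrix with `M ⪰ ρ·pad(M_RE)` (Loewner
order, `pad` placing `M_RE` as the upper-left block and zeros elsewhere), then
every diagonal entry of `M⁻¹` corresponding to an index `j < k` satisfies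
`(M⁻¹)_{jj} ≤ ρ⁻¹ (M_RE⁻¹)_{jj}`. -/
theorem combined_data_variance_reduction {k l : ℕ}
    (MRE : Matrix (Fin k) (Fin k) ℝ) (hMRE : MRE.PosDef)
    (ρ : ℝ) (hρ0 : 0 < ρ) (hρ1 : ρ ≤ 1)
    (M : Matrix (Fin k ⊕ Fin l) (Fin k ⊕ Fin l) ℝ)
    (hMsymm : M.IsSymm) (hM : M.PosDef)
    (hdom : (M - ρ • Matrix.fromBlocks MRE 0 0 0).PosSemidef) :
    ∀ j : Fin k, M⁻¹ (Sum.inl j) (Sum.inl j) ≤ ρ⁻¹ * MRE⁻¹ j j := by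
  intro j
  have hdet : IsUnit M.det := isUnit_iff_ne_zero.mpr (ne_of_gt hM.det_pos)
  set v : (Fin k ⊕ Fin l) → ℝ := M⁻¹ *ᵥ Pi.single (Sum.inl j) 1 with hv
  have hMv : M *ᵥ v = Pi.single (Sum.inl j) 1 := by
    rw [hv, mulVec_mulVec, mul_nonsing_inv _ hdet, one_mulVec]
  set c : ℝ := M⁻¹ (Sum.inl j) (Sum.inl j) with hc
  have hvj : v (Sum.inl j) = c := by
    rw [hv]; simp [mulVec_single, hc]
  have hvMv : v ⬝ᵥ (M *ᵥ v) = c := by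
    rw [hMv, dotProduct_single, mul_one, hvj]
  set u : Fin k → ℝ := fun i => v (Sum.inl i) with hu
  -- quadratic form of the padded block
  have hpad : v ⬝ᵥ ((Matrix.fromBlocks MRE 0 0 0 : Matrix _ _ ℝ) *ᵥ v)
      = u ⬝ᵥ (MRE *ᵥ u) := by
    rw [fromBlocks_mulVec]
    simp [dotProduct, Fintype.sum_sum_type, hu]
    rfl
  have hdom' : ρ * (u ⬝ᵥ (MRE *ᵥ u)) ≤ c := by
    have := hdom.dotProduct_mulVec_nonneg v
    simp only [sub_mulVec, dotProduct_sub, smul_mulVec, dotProduct_smul,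
      star_trivial] at this
    rw [hvMv, hpad] at this
    simpa [smul_eq_mul] using sub_nonneg.mp this
  -- apply the variational lemma to the scaled vector ρ • u
  have hkey := key_var MRE hMRE j (ρ • u)
  have h1 : (ρ • u) j = ρ * c := by simp [hu, hvj]
  have h2 : (ρ • u) ⬝ᵥ (MRE *ᵥ (ρ • u)) = ρ ^ 2 * (u ⬝ᵥ (MRE *ᵥ u)) := by
    rw [mulVec_smul, smul_dotProduct, dotProduct_smul]
    ring_nf
  rw [h1, h2] at hkey
  -- combine:  2ρc - ρ² uᵀMREu ≤ K  and  ρ uᵀMREu ≤ c  give  ρc ≤ K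
  have hρc : ρ * c ≤ MRE⁻¹ j j := by nlinarith
  show c ≤ ρ⁻¹ * MRE⁻¹ j j
  rw [inv_mul_eq_div, le_div_iff₀ hρ0]
  linarith
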